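/- Let C be a covering of a finite nonempty set U. Then SH satisfies all four matroid closure axioms — (CL1) X ⊆ SH(X); (CL2) X ⊆ Y implies SH(X) ⊆ SH(Y); (CL3) SH(SH(X)) = SH(X); (CL4) y ∈ SH(X ∪ {x}) \ SH(X) implies x ∈ SH(X ∪ {y}) — if and only if the family {SH({x}) : x ∈ U} forms a partition of U, i.e., for all x, y ∈ U, either SH({x}) = SH({y}) or SH({x}) ∩ SH({y}) = ∅. -/
import Mathlib


open Set

/-- A covering of a finite nonempty universe `α`: a family of nonempty subsets whose union is everything. -/
def IsCovering {α : Type*} (C : Set (Set α)) : Prop :=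
  (∀ K ∈ C, K.Nonempty) ∧ ⋃₀ C = Set.univ

/-- The second type of covering lower approximation. -/
def SL {α : Type*} (C : Set (Set α)) (X : Set α) : Set α :=
  ⋃₀ {K | K ∈ C ∧ K ⊆ X}

/-- The second type of covering upper approximation. -/
def SH {α : Type*} (C : Set (Set α)) (X : Set α) : Set α :=
  ⋃₀ {K | K ∈ C ∧ (K ∩ X).Nonempty}

/-- The minimal description of a point. -/
def Md {α : Type*} (C : Set (Set α)) (x : α) : Set (Set α) :=
  {K | K ∈ C ∧ x ∈ K ∧ ∀ S ∈ C, x ∈ S → S ⊆ K → S = K}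

/-- A covering is unary if every point has exactly one element in its minimal description. -/
def Unary {α : Type*} (C : Set (Set α)) : Prop :=
  ∀ x : α, ∃! K, K ∈ Md C x

/-- The neighborhood of a point. -/
def Nbhd {α : Type*} (C : Set (Set α)) (x : α) : Set α :=
  ⋂₀ {K | K ∈ C ∧ x ∈ K}

/-- The indiscernible neighborhood of a point. -/
def IndNbhd {α : Type*} (C : Set (Set α)) (x : α) : Set α :=
  ⋃₀ {K | K ∈ C ∧ x ∈ K}

/-- A member of the covering is reducible if it is a union of other members. -/
def Reducible {α : Type*} (C : Set (Set α)) (K : Set α) : Prop :=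
  ∃ D ⊆ C \ {K}, K = ⋃₀ D

/-- The reduct of a covering: its irreducible members. -/
def reduct {α : Type*} (C : Set (Set α)) : Set (Set α) :=
  {K | K ∈ C ∧ ¬ Reducible C K}

/-- The closure operator induced by the fixed point family of `SL`. -/
def clC {α : Type*} (C : Set (Set α)) (X : Set α) : Set α :=
  ⋂₀ {S | SL C S = S ∧ X ⊆ S}


lemma mem_SH {α : Type*} {C : Set (Set α)} {X : Set α} {y : α} :
    y ∈ SH C X ↔ ∃ K, K ∈ C ∧ y ∈ K ∧ (K ∩ X).Nonempty := by
  simp only [SH, Set.mem_sUnion, Set.mem_setOf_eq]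
  tauto

lemma mem_SH_single {α : Type*} {C : Set (Set α)} {x y : α} :
    y ∈ SH C {x} ↔ ∃ K, K ∈ C ∧ y ∈ K ∧ x ∈ K := by
  simp only [mem_SH, Set.inter_singleton_nonempty]

lemma SH_mono {α : Type*} (C : Set (Set α)) {X Y : Set α} (h : X ⊆ Y) :
    SH C X ⊆ SH C Y := by
  intro z hz
  rw [mem_SH] at hz ⊢
  obtain ⟨K, hK, hzK, w, hw1, hw2⟩ := hz
  exact ⟨K, hK, hzK, w, hw1, h hw2⟩

theorem stmt_9 {α : Type*} [Fintype α] [Nonempty α] (C : Set (Set α))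
    (hC : IsCovering C) :
    ((∀ X : Set α, X ⊆ SH C X) ∧
     (∀ X Y : Set α, X ⊆ Y → SH C X ⊆ SH C Y) ∧
     (∀ X : Set α, SH C (SH C X) = SH C X) ∧
     (∀ (X : Set α) (x y : α),
        y ∈ SH C (X ∪ {x}) \ SH C X → x ∈ SH C (X ∪ {y}))) ↔
    (∀ x y : α, SH C {x} = SH C {y} ∨ SH C {x} ∩ SH C {y} = ∅) := by
  constructor
  · rintro ⟨_, h2, h3, _⟩ x y
    by_contra h
    push_neg at h
    obtain ⟨hne, hint⟩ := h
    obtain ⟨z, hzx, hzy⟩ := hint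
    have key : ∀ a : α, z ∈ SH C {a} → SH C {a} = SH C {z} := by
      intro a hza
      apply Set.Subset.antisymm
      · have : SH C {a} ⊆ SH C (SH C {z}) := by
          apply h2
          intro b hb
          rw [Set.mem_singleton_iff] at hb
          subst hb
          rw [mem_SH_single] at hza ⊢
          tauto
        rwa [h3] at this
      · have : SH C {z} ⊆ SH C (SH C {a}) := by
          apply h2
          intro b hb
          rw [Set.mem_singleton_iff] at hb
          subst hb
          exact hza
        rwa [h3] at this
    exact hne ((key x hzx).trans (key y hzy).symm)
  · intro hp
    have mem_self : ∀ a : α, a ∈ SH C {a} := by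
      intro a
      rw [mem_SH_single]
      have : a ∈ ⋃₀ C := by rw [hC.2]; trivial
      obtain ⟨K, hK, haK⟩ := this
      exact ⟨K, hK, haK, haK⟩
    have cl1 : ∀ X : Set α, X ⊆ SH C X := by
      intro X a ha
      have := mem_self a
      rw [mem_SH_single] at this
      obtain ⟨K, hK, haK, _⟩ := this
      rw [mem_SH]
      exact ⟨K, hK, haK, a, haK, ha⟩
    refine ⟨cl1, fun X Y h => SH_mono C h, ?_, ?_⟩
    · intro X
      apply Set.Subset.antisymm _ (cl1 _)
      intro w hw
      rw [mem_SH] at hw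
      obtain ⟨K, hK, hwK, z, hzK, hzSH⟩ := hw
      rw [mem_SH] at hzSH
      obtain ⟨K', hK', hzK', u, huK', huX⟩ := hzSH
      have hzu : z ∈ SH C {u} := mem_SH_single.mpr ⟨K', hK', hzK', huK'⟩
      have hzz : z ∈ SH C {z} := mem_self z
      have : SH C {z} = SH C {u} := by
        rcases hp z u with h | h
        · exact h
        · exact absurd (Set.eq_empty_iff_forall_notMem.mp h z ⟨hzz, hzu⟩) (fun f => f)
      have hwz : w ∈ SH C {z} := mem_SH_single.mpr ⟨K, hK, hwK, hzK⟩
      rw [this, mem_SH_single] at hwz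
      obtain ⟨K'', hK'', hwK'', huK''⟩ := hwz
      rw [mem_SH]
      exact ⟨K'', hK'', hwK'', u, huK'', huX⟩
    · intro X x y hy
      obtain ⟨hy1, hy2⟩ := hy
      rw [mem_SH] at hy1
      obtain ⟨K, hK, hyK, z, hzK, hzX⟩ := hy1
      rcases hzX with hz | hz
      · exact absurd (mem_SH.mpr ⟨K, hK, hyK, z, hzK, hz⟩) hy2
      · rw [Set.mem_singleton_iff] at hz
        subst hz
        rw [mem_SH]
        exact ⟨K, hK, hzK, y, hyK, Or.inr rfl⟩
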